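/- Let p be a prime, let ℓ ≥ 1, let S = 𝔽_p[t_1,…,t_ℓ], and let (b_1,…,b_ℓ) be a regular sequence in S consisting of homogeneous polynomials, with d_i = deg b_i > 0. Fix an integer m with 1 ≤ m ≤ ℓ, and set I = the ideal generated by {b_i·b_j : 1 ≤ i, j ≤ m} ∪ {b_k : m < k ≤ ℓ} and J = (b_1,…,b_ℓ). Then both I and J are homogeneous ideals, and for every degree n ≥ 0 one has dim_{𝔽_p}(S/I)_n = dim_{𝔽_p}(S/J)_n + Σ_{i=1}^{m} dim_{𝔽_p}(S/J)_{n−d_i}, where (−)_n denotes the degree-n graded piece of the graded quotient ring. In other words, there is a degree-preserving 𝔽_p-linear isomorphism S/I ≅ S/J ⊕ ⊕_{i=1}^{m} (S/J)(−d_i). -/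

import Mathlib

open MvPolynomial


section LinAlg
variable {K : Type*} [Field K] {M N : Type*} [AddCommGroup M] [Module K M]
  [AddCommGroup N] [Module K N]

lemma aux_finrank_map_add (f : M →ₗ[K] N) (p : Submodule K M) [FiniteDimensional K p] :
    Module.finrank K ↥(p.map f) + Module.finrank K ↥(LinearMap.ker f ⊓ p) =
      Module.finrank K ↥p := by
  have h := LinearMap.finrank_range_add_finrank_ker (f.comp p.subtype)
  rw [LinearMap.range_comp, Submodule.range_subtype, LinearMap.ker_comp] at h
  have e1 : (LinearMap.ker f).comap p.subtype =
      (LinearMap.ker f ⊓ p).comap p.subtype := by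
    ext x; simp [Submodule.mem_comap, x.2]
  have e2 : Module.finrank K ↥((LinearMap.ker f ⊓ p).comap p.subtype) =
      Module.finrank K ↥(LinearMap.ker f ⊓ p) :=
    (Submodule.comapSubtypeEquivOfLe inf_le_right).finrank_eq
  rw [e1, e2] at h
  exact h

def auxPiSubEquiv {ι : Type*} [Fintype ι] {M : ι → Type*} [∀ i, AddCommGroup (M i)]
    [∀ i, Module K (M i)] (q : Π i, Submodule K (M i)) :
    ↥(Submodule.pi Set.univ q) ≃ₗ[K] Π i, ↥(q i) where
  toFun x i := ⟨x.1 i, x.2 i (Set.mem_univ i)⟩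
  map_add' x y := rfl
  map_smul' c x := rfl
  invFun x := ⟨fun i => x i, fun i _ => (x i).2⟩
  left_inv x := rfl
  right_inv x := rfl

end LinAlg

section HC
variable {σ R : Type*} [CommSemiring R]

lemma aux_hc_mul (c g : MvPolynomial σ R) (e n : ℕ) (hg : g.IsHomogeneous e) :
    homogeneousComponent n (c * g) =
      if e ≤ n then homogeneousComponent (n - e) c * g else 0 := by
  conv_lhs => rw [← sum_homogeneousComponent c, Finset.sum_mul, map_sum]
  have hterm : ∀ j, homogeneousComponent n (homogeneousComponent j c * g)
      = if j = n - e ∧ e ≤ n then homogeneousComponent j c * g else 0 := by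
    intro j
    rw [homogeneousComponent_of_mem ((mem_homogeneousSubmodule _ _).mpr
      ((homogeneousComponent_isHomogeneous j c).mul hg))]
    by_cases h : n = j + e
    · rw [if_pos h, if_pos (by omega)]
    · rw [if_neg h, if_neg (by omega)]
  rw [Finset.sum_congr rfl fun j _ => hterm j]
  by_cases he : e ≤ n
  · rw [if_pos he,
      Finset.sum_congr rfl fun j _ => (by simp [he] :
        (if j = n - e ∧ e ≤ n then homogeneousComponent j c * g else 0) =
          if j = n - e then homogeneousComponent j c * g else 0),
      Finset.sum_ite_eq' (Finset.range _) (n - e)]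
    by_cases hmem : n - e ∈ Finset.range (c.totalDegree + 1)
    · rw [if_pos hmem]
    · rw [if_neg hmem]
      have hz : c.totalDegree < n - e := by
        simp only [Finset.mem_range, not_lt] at hmem; omega
      rw [homogeneousComponent_eq_zero _ c hz, zero_mul]
  · rw [if_neg he]
    exact Finset.sum_eq_zero fun j _ => by simp [he]
end HC


section Syz
variable {A : Type*} [CommRing A] {ℓ : ℕ}

lemma aux_syz0 (b : Fin ℓ → A)
    (hreg : ∀ i : Fin ℓ, ∀ x : A,
      x * b i ∈ Ideal.span (b '' {j | j < i}) → x ∈ Ideal.span (b '' {j | j < i})) :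
    ∀ n : ℕ, ∀ y : Fin ℓ → A,
      (∑ i ∈ Finset.univ.filter (fun i : Fin ℓ => (i : ℕ) < n), y i * b i = 0) →
      ∀ i : Fin ℓ, (i : ℕ) < n → y i ∈ Ideal.span (b '' {j : Fin ℓ | (j : ℕ) < n}) := by
  intro n
  induction n with
  | zero => exact fun y _ i hi => absurd hi (by omega)
  | succ n ih =>
    intro y hy i hi
    by_cases hnl : n < ℓ
    case neg =>
      have hsets : {j : Fin ℓ | (j : ℕ) < n + 1} = {j : Fin ℓ | (j : ℕ) < n} := by
        ext j; have := j.2; simp only [Set.mem_setOf_eq]; omega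
      have hfil : Finset.univ.filter (fun i : Fin ℓ => (i : ℕ) < n + 1)
          = Finset.univ.filter (fun i : Fin ℓ => (i : ℕ) < n) := by
        apply Finset.filter_congr; intro j _; have := j.2; omega
      rw [hsets]
      exact ih y (by rw [← hfil]; exact hy) i (by have := i.2; omega)
    case pos =>
      set i0 : Fin ℓ := ⟨n, hnl⟩ with hi0def
      have hset : {j : Fin ℓ | j < i0} = {j : Fin ℓ | (j : ℕ) < n} := by
        ext j; exact Iff.rfl
      have hsplit : Finset.univ.filter (fun i : Fin ℓ => (i : ℕ) < n + 1)
          = insert i0 (Finset.univ.filter fun i : Fin ℓ => (i : ℕ) < n) := by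
        ext j
        simp only [Finset.mem_filter, Finset.mem_univ, true_and, Finset.mem_insert,
          Fin.ext_iff, hi0def]
        omega
      have hi0n : i0 ∉ Finset.univ.filter fun i : Fin ℓ => (i : ℕ) < n := by
        simp [hi0def]
      rw [hsplit, Finset.sum_insert hi0n] at hy
      have hmem : y i0 * b i0 ∈ Ideal.span (b '' {j | j < i0}) := by
        have heq : y i0 * b i0
            = -∑ i ∈ Finset.univ.filter (fun i : Fin ℓ => (i : ℕ) < n), y i * b i := by
          linear_combination hy
        rw [heq]
        refine neg_mem (Ideal.sum_mem _ fun k hk => Ideal.mul_mem_left _ _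
          (Ideal.subset_span ⟨k, ?_, rfl⟩))
        have := (Finset.mem_filter.mp hk).2
        simp only [Set.mem_setOf_eq, Fin.lt_def]
        exact (by simpa using this : (k : ℕ) < n)
      have hy0 : y i0 ∈ Ideal.span (b '' {j : Fin ℓ | (j : ℕ) < n}) := by
        rw [← hset]; exact hreg i0 _ hmem
      have hspan : Ideal.span (b '' {j : Fin ℓ | (j : ℕ) < n})
          = Ideal.span (Set.range fun j : Fin ℓ => if (j : ℕ) < n then b j else 0) := by
        apply le_antisymm <;> rw [Ideal.span_le]
        · rintro _ ⟨j, hj, rfl⟩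
          exact Ideal.subset_span ⟨j, by simp [Set.mem_setOf_eq.mp hj]⟩
        · rintro _ ⟨j, rfl⟩
          by_cases h : (j : ℕ) < n
          · simp only [h, if_pos]
            exact Ideal.subset_span ⟨j, h, rfl⟩
          · simp [h]
      obtain ⟨z, hz⟩ := Ideal.mem_span_range_iff_exists_fun.mp (hspan ▸ hy0)
      have hrep : ∑ j ∈ Finset.univ.filter (fun j : Fin ℓ => (j : ℕ) < n),
          (if (j : ℕ) < n then z j else 0) * b j = y i0 := by
        rw [Finset.sum_filter, ← hz]
        refine Finset.sum_congr rfl fun j _ => ?_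
        by_cases h : (j : ℕ) < n <;> simp [h]
      have hy'' : ∑ j ∈ Finset.univ.filter (fun j : Fin ℓ => (j : ℕ) < n),
          (y j + (if (j : ℕ) < n then z j else 0) * b i0) * b j = 0 := by
        have expand : ∀ j : Fin ℓ, (y j + (if (j : ℕ) < n then z j else 0) * b i0) * b j
            = y j * b j + ((if (j : ℕ) < n then z j else 0) * b j) * b i0 :=
          fun j => by ring
        rw [Finset.sum_congr rfl fun j _ => expand j, Finset.sum_add_distrib,
          ← Finset.sum_mul, hrep]
        linear_combination hy
      have hsub : Ideal.span (b '' {j : Fin ℓ | (j : ℕ) < n})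
          ≤ Ideal.span (b '' {j : Fin ℓ | (j : ℕ) < n + 1}) :=
        Ideal.span_mono (Set.image_mono fun j hj => by
          simp only [Set.mem_setOf_eq] at *; omega)
      by_cases hin : (i : ℕ) < n
      · have h1 := ih _ hy'' i hin
        have h2 : y i = (y i + (if (i : ℕ) < n then z i else 0) * b i0)
            - (if (i : ℕ) < n then z i else 0) * b i0 := by ring
        rw [h2]
        refine sub_mem (hsub h1) (Ideal.mul_mem_left _ _ (Ideal.subset_span ⟨i0, ?_, rfl⟩))
        simp [hi0def]
      · have : i = i0 := Fin.ext (by simp [hi0def]; omega)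
        rw [this]
        exact hsub hy0

lemma aux_syz_all (b : Fin ℓ → A)
    (hreg : ∀ i : Fin ℓ, ∀ x : A,
      x * b i ∈ Ideal.span (b '' {j | j < i}) → x ∈ Ideal.span (b '' {j | j < i}))
    (y : Fin ℓ → A) (hy : ∑ i : Fin ℓ, y i * b i = 0) (i : Fin ℓ) :
    y i ∈ Ideal.span (Set.range b) := by
  have h1 : Finset.univ.filter (fun i : Fin ℓ => (i : ℕ) < ℓ) = Finset.univ := by
    apply Finset.filter_true_of_mem; intro j _; exact j.2
  have h2 : (b '' {j : Fin ℓ | (j : ℕ) < ℓ}) = Set.range b := by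
    have : {j : Fin ℓ | (j : ℕ) < ℓ} = Set.univ := by ext j; simp [j.2]
    rw [this, Set.image_univ]
  rw [← h2]
  exact aux_syz0 b hreg ℓ y (by rw [h1]; exact hy) i i.2

end Syz

section F
variable {A : Type*} [CommRing A] {ℓ : ℕ}

def auxF (m : ℕ) (b : Fin ℓ → A) : (Fin ℓ × Fin ℓ) ⊕ Fin ℓ → A :=
  Sum.elim (fun q => if (q.1 : ℕ) < m ∧ (q.2 : ℕ) < m then b q.1 * b q.2 else 0)
    (fun k => if m ≤ (k : ℕ) then b k else 0)

lemma auxF_span (m : ℕ) (b : Fin ℓ → A) :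
    Ideal.span ({x | ∃ i j : Fin ℓ, (i : ℕ) < m ∧ (j : ℕ) < m ∧ x = b i * b j} ∪
        {x | ∃ k : Fin ℓ, m ≤ (k : ℕ) ∧ x = b k})
      = Ideal.span (Set.range (auxF m b)) := by
  apply le_antisymm <;> rw [Ideal.span_le]
  · rintro x (⟨i, j, hi, hj, rfl⟩ | ⟨k, hk, rfl⟩)
    · exact Ideal.subset_span ⟨Sum.inl (i, j), by simp [auxF, hi, hj]⟩
    · exact Ideal.subset_span ⟨Sum.inr k, by simp [auxF, hk]⟩
  · rintro _ ⟨q, rfl⟩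
    rcases q with ⟨i, j⟩ | k
    · by_cases h : (i : ℕ) < m ∧ (j : ℕ) < m
      · simp only [auxF, Sum.elim_inl, if_pos h]
        exact Ideal.subset_span (Or.inl ⟨i, j, h.1, h.2, rfl⟩)
      · simp only [auxF, Sum.elim_inl, if_neg h]
        exact (Ideal.span _).zero_mem
    · by_cases h : m ≤ (k : ℕ)
      · simp only [auxF, Sum.elim_inr, if_pos h]
        exact Ideal.subset_span (Or.inr ⟨k, h, rfl⟩)
      · simp only [auxF, Sum.elim_inr, if_neg h]
        exact (Ideal.span _).zero_mem

lemma aux_syz_main (m : ℕ) (b : Fin ℓ → A)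
    (hreg : ∀ i : Fin ℓ, ∀ x : A,
      x * b i ∈ Ideal.span (b '' {j | j < i}) → x ∈ Ideal.span (b '' {j | j < i}))
    (x : Fin ℓ → A)
    (hx : ∑ i ∈ Finset.univ.filter (fun i : Fin ℓ => (i : ℕ) < m), x i * b i ∈
      Ideal.span (Set.range (auxF m b))) :
    ∀ i : Fin ℓ, (i : ℕ) < m → x i ∈ Ideal.span (Set.range b) := by
  obtain ⟨w, hw⟩ := Ideal.mem_span_range_iff_exists_fun.mp hx
  have hx'sum : ∑ k : Fin ℓ, (if (k : ℕ) < m then x k else 0) * b k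
      = ∑ i ∈ Finset.univ.filter (fun i : Fin ℓ => (i : ℕ) < m), x i * b i := by
    rw [Finset.sum_filter]
    refine Finset.sum_congr rfl fun k _ => ?_
    by_cases h : (k : ℕ) < m <;> simp [h]
  -- coefficient functions
  set c : Fin ℓ → Fin ℓ → A := fun i j =>
    if (i : ℕ) < m ∧ (j : ℕ) < m then w (Sum.inl (i, j)) else 0 with hc
  set e : Fin ℓ → A := fun j => if m ≤ (j : ℕ) then w (Sum.inr j) else 0 with he
  have h2 : ∑ j : Fin ℓ, (∑ i : Fin ℓ, c i j * b i) * b j + ∑ j : Fin ℓ, e j * b j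
      = ∑ k : Fin ℓ, (if (k : ℕ) < m then x k else 0) * b k := by
    rw [hx'sum, ← hw, Fintype.sum_sum_type, Fintype.sum_prod_type]
    congr 1
    · rw [Finset.sum_comm]
      refine Finset.sum_congr rfl fun j _ => ?_
      rw [Finset.sum_mul]
      refine Finset.sum_congr rfl fun i _ => ?_
      by_cases h : (i : ℕ) < m ∧ (j : ℕ) < m
      · simp only [hc, auxF, Sum.elim_inl, if_pos h]; ring
      · simp [hc, auxF, h]
    · refine Finset.sum_congr rfl fun k _ => ?_
      by_cases h : m ≤ (k : ℕ) <;> simp [he, auxF, h]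
  set y : Fin ℓ → A := fun j =>
    (if (j : ℕ) < m then x j else 0) - (∑ i : Fin ℓ, c i j * b i) - e j with hy
  have hy0 : ∑ j : Fin ℓ, y j * b j = 0 := by
    have expand : ∀ j : Fin ℓ, y j * b j
        = (if (j : ℕ) < m then x j else 0) * b j - (∑ i : Fin ℓ, c i j * b i) * b j
          - e j * b j := fun j => by simp only [hy]; ring
    rw [Finset.sum_congr rfl fun j _ => expand j, Finset.sum_sub_distrib,
      Finset.sum_sub_distrib]
    rw [sub_sub, sub_eq_zero, ← h2]
  intro i him
  have hyJ := aux_syz_all b hreg y hy0 i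
  have hxi : x i = y i + (∑ i' : Fin ℓ, c i' i * b i') + e i := by
    simp only [hy, if_pos him]; ring
  rw [hxi]
  refine add_mem (add_mem hyJ (Ideal.sum_mem _ fun i' _ =>
    Ideal.mul_mem_left _ _ (Ideal.subset_span ⟨i', rfl⟩))) ?_
  have : e i = 0 := by simp only [he]; rw [if_neg (by omega)]
  rw [this]
  exact zero_mem _

end F


section HCspan
variable {σ R : Type*} [CommSemiring R]

lemma aux_hc_span {ι : Type*} [Fintype ι]
    (v : ι → MvPolynomial σ R) (e : ι → ℕ) (hv : ∀ k, (v k).IsHomogeneous (e k))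
    {x : MvPolynomial σ R} (hx : x ∈ Ideal.span (Set.range v)) (n : ℕ) :
    ∃ c : ι → MvPolynomial σ R, (∀ k, (c k).IsHomogeneous (n - e k)) ∧
      (∀ k, n < e k → c k = 0) ∧ homogeneousComponent n x = ∑ k, c k * v k := by
  obtain ⟨f, hf⟩ := Ideal.mem_span_range_iff_exists_fun.mp hx
  refine ⟨fun k => if e k ≤ n then homogeneousComponent (n - e k) (f k) else 0,
    fun k => ?_, fun k hk => ?_, ?_⟩
  · by_cases h : e k ≤ n
    · simpa [h] using homogeneousComponent_isHomogeneous (n - e k) (f k)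
    · simp only [h, if_neg, if_false]
      exact isHomogeneous_zero _ _ _
  · simp only []
    rw [if_neg (by omega)]
  · rw [← hf, map_sum]
    refine Finset.sum_congr rfl fun k _ => ?_
    rw [aux_hc_mul _ _ _ _ (hv k)]
    by_cases h : e k ≤ n <;> simp [h]

lemma aux_span_homog {ι : Type*} [Fintype ι]
    (v : ι → MvPolynomial σ R) (e : ι → ℕ) (hv : ∀ k, (v k).IsHomogeneous (e k)) :
    ∀ x ∈ Ideal.span (Set.range v), ∀ n,
      homogeneousComponent n x ∈ Ideal.span (Set.range v) := by
  intro x hx n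
  obtain ⟨c, -, -, hc⟩ := aux_hc_span v e hv hx n
  rw [hc]
  exact Ideal.sum_mem _ fun k _ => Ideal.mul_mem_left _ _ (Ideal.subset_span ⟨k, rfl⟩)

end HCspan

set_option maxHeartbeats 2000000 in
set_option synthInstance.maxHeartbeats 400000 in
/-- let `S = 𝔽_p[t_1, ..., t_ℓ]`, let `(b_1, ..., b_ℓ)` be a
regular sequence of homogeneous polynomials with `d_i = deg b_i > 0`, let
`1 ≤ m ≤ ℓ`, and let `I = (b_i b_j (i, j ≤ m), b_k (k > m))`,
`J = (b_1, ..., b_ℓ)`.  Then `I` and `J` are homogeneous ideals and for every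
`n` one has
`dim (S/I)_n = dim (S/J)_n + Σ_{i ≤ m, d_i ≤ n} dim (S/J)_{n - d_i}`,
i.e. `S/I ≅ S/J ⊕ ⊕_{i=1}^m (S/J)(-d_i)` as graded `𝔽_p`-vector spaces. -/
theorem graded_dim_quotient_regular_sequence (p ℓ m : ℕ) (hp : p.Prime)
    (hℓ : 1 ≤ ℓ) (hm1 : 1 ≤ m) (hmℓ : m ≤ ℓ)
    (b : Fin ℓ → MvPolynomial (Fin ℓ) (ZMod p)) (d : Fin ℓ → ℕ)
    (hd : ∀ i, 0 < d i)
    (hhom : ∀ i, (b i).IsHomogeneous (d i))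
    -- `(b_1, ..., b_ℓ)` is a regular sequence:
    (hreg : ∀ i : Fin ℓ, ∀ x : MvPolynomial (Fin ℓ) (ZMod p),
      x * b i ∈ Ideal.span (b '' {j | j < i}) → x ∈ Ideal.span (b '' {j | j < i}))
    (hne : Ideal.span (Set.range b) ≠ ⊤)
    (I J : Ideal (MvPolynomial (Fin ℓ) (ZMod p)))
    (hI : I = Ideal.span
      ({x | ∃ i j : Fin ℓ, (i : ℕ) < m ∧ (j : ℕ) < m ∧ x = b i * b j} ∪
        {x | ∃ k : Fin ℓ, m ≤ (k : ℕ) ∧ x = b k}))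
    (hJ : J = Ideal.span (Set.range b)) :
    -- `I` and `J` are homogeneous ideals:
    (∀ x ∈ I, ∀ n : ℕ, homogeneousComponent n x ∈ I) ∧
    (∀ x ∈ J, ∀ n : ℕ, homogeneousComponent n x ∈ J) ∧
    -- dimension count in each degree `n`:
    (∀ n : ℕ,
      Module.finrank (ZMod p)
        ((homogeneousSubmodule (Fin ℓ) (ZMod p) n).map
          (Ideal.Quotient.mkₐ (ZMod p) I).toLinearMap) =
      Module.finrank (ZMod p)
        ((homogeneousSubmodule (Fin ℓ) (ZMod p) n).map
          (Ideal.Quotient.mkₐ (ZMod p) J).toLinearMap) +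
      ∑ i ∈ Finset.univ.filter (fun i : Fin ℓ => (i : ℕ) < m ∧ d i ≤ n),
        Module.finrank (ZMod p)
          ((homogeneousSubmodule (Fin ℓ) (ZMod p) (n - d i)).map
            (Ideal.Quotient.mkₐ (ZMod p) J).toLinearMap)) := by
  haveI : Fact p.Prime := ⟨hp⟩
  -- homogeneity of the generator family of `I`
  have hFhom : ∀ q, ((auxF m b) q).IsHomogeneous
      (Sum.elim (fun q : Fin ℓ × Fin ℓ => d q.1 + d q.2) (fun k : Fin ℓ => d k) q) := by
    rintro (⟨i, j⟩ | k)
    · by_cases h : (i : ℕ) < m ∧ (j : ℕ) < m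
      · simpa only [auxF, Sum.elim_inl, if_pos h] using (hhom i).mul (hhom j)
      · simp only [auxF, Sum.elim_inl, if_neg h, Sum.elim_inl]
        exact isHomogeneous_zero _ _ _
    · by_cases h : m ≤ (k : ℕ)
      · simpa only [auxF, Sum.elim_inr, if_pos h] using hhom k
      · simp only [auxF, Sum.elim_inr, if_neg h]
        exact isHomogeneous_zero _ _ _
  have hIJ : I ≤ J := by
    rw [hI, hJ, Ideal.span_le]
    rintro x (⟨i, j, hi, hj, rfl⟩ | ⟨k, hk, rfl⟩)
    · exact Ideal.mul_mem_left _ _ (Ideal.subset_span ⟨j, rfl⟩)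
    · exact Ideal.subset_span ⟨k, rfl⟩
  refine ⟨?_, ?_, ?_⟩
  · intro x hx n
    rw [hI, auxF_span] at hx ⊢
    exact aux_span_homog (auxF m b) _ hFhom x hx n
  · intro x hx n
    rw [hJ] at hx ⊢
    exact aux_span_homog b d hhom x hx n
  intro n
  have hfd : ∀ k : ℕ, FiniteDimensional (ZMod p)
      ↥(homogeneousSubmodule (Fin ℓ) (ZMod p) k) := by
    intro k
    refine Submodule.finiteDimensional_of_le
      (S₂ := restrictTotalDegree (Fin ℓ) (ZMod p) k) ?_
    intro x hx
    exact (mem_restrictTotalDegree _ _ _).mpr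
      ((mem_homogeneousSubmodule _ _).mp hx).totalDegree_le
  haveI := hfd n
  haveI : ∀ i : {i : Fin ℓ // (i : ℕ) < m ∧ d i ≤ n},
      FiniteDimensional (ZMod p)
        ↥(homogeneousSubmodule (Fin ℓ) (ZMod p) (n - d i.1)) := fun i => hfd _
  have hkImem : ∀ z, z ∈ LinearMap.ker (Ideal.Quotient.mkₐ (ZMod p) I).toLinearMap ↔ z ∈ I := by
    intro z
    rw [LinearMap.mem_ker, AlgHom.toLinearMap_apply, Ideal.Quotient.mkₐ_eq_mk]
    exact Ideal.Quotient.eq_zero_iff_mem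
  have hkJmem : ∀ z, z ∈ LinearMap.ker (Ideal.Quotient.mkₐ (ZMod p) J).toLinearMap ↔ z ∈ J := by
    intro z
    rw [LinearMap.mem_ker, AlgHom.toLinearMap_apply, Ideal.Quotient.mkₐ_eq_mk]
    exact Ideal.Quotient.eq_zero_iff_mem
  have hmulI : ∀ i : Fin ℓ, (i : ℕ) < m →
      ∀ z ∈ J, z * b i ∈ I := by
    intro i him z hz
    rw [hJ] at hz
    obtain ⟨w, hw⟩ := Ideal.mem_span_range_iff_exists_fun.mp hz
    rw [← hw, Finset.sum_mul]
    refine Ideal.sum_mem _ fun k _ => ?_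
    by_cases hk : (k : ℕ) < m
    · have e : w k * b k * b i = w k * (b k * b i) := by ring
      rw [e]
      exact Ideal.mul_mem_left _ _
        (hI ▸ Ideal.subset_span (Or.inl ⟨k, i, hk, him, rfl⟩))
    · have e : w k * b k * b i = (w k * b i) * b k := by ring
      rw [e]
      exact Ideal.mul_mem_left _ _
        (hI ▸ Ideal.subset_span (Or.inr ⟨k, by omega, rfl⟩))
  -- the linear map `x ↦ ∑ xᵢ bᵢ`
  set Ψ : (Π i : {i : Fin ℓ // (i : ℕ) < m ∧ d i ≤ n},
      ↥(homogeneousSubmodule (Fin ℓ) (ZMod p) (n - d i.1))) →ₗ[ZMod p]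
      MvPolynomial (Fin ℓ) (ZMod p) :=
    ∑ i : {i : Fin ℓ // (i : ℕ) < m ∧ d i ≤ n},
      (LinearMap.mulRight (ZMod p) (b i.1)).comp
        ((homogeneousSubmodule (Fin ℓ) (ZMod p) (n - d i.1)).subtype.comp
          (LinearMap.proj i)) with hΨdef
  have hΨ : ∀ x, Ψ x = ∑ i : {i : Fin ℓ // (i : ℕ) < m ∧ d i ≤ n},
      (x i : MvPolynomial (Fin ℓ) (ZMod p)) * b i.1 := by
    intro x
    rw [hΨdef, LinearMap.sum_apply]
    simp [LinearMap.mulRight_apply]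
  set Φ := (Ideal.Quotient.mkₐ (ZMod p) I).toLinearMap.comp Ψ with hΦdef
  -- `Ψ x` lands in the degree-`n` part of `J`
  have hΨmem : ∀ x, Ψ x ∈ LinearMap.ker (Ideal.Quotient.mkₐ (ZMod p) J).toLinearMap
      ⊓ homogeneousSubmodule (Fin ℓ) (ZMod p) n := by
    intro x
    rw [hΨ]
    refine Submodule.mem_inf.mpr ⟨(hkJmem _).mpr ?_, ?_⟩
    · exact Ideal.sum_mem _ fun i _ => Ideal.mul_mem_left _ _
        (hJ ▸ Ideal.subset_span ⟨i.1, rfl⟩)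
    · refine Submodule.sum_mem _ fun i _ => ?_
      have h := ((mem_homogeneousSubmodule _ _).mp (x i).2).mul (hhom i.1)
      rw [Nat.sub_add_cancel i.2.2] at h
      exact (mem_homogeneousSubmodule _ _).mpr h
  -- the range of `Φ`
  have hrange : LinearMap.range Φ
      = Submodule.map (Ideal.Quotient.mkₐ (ZMod p) I).toLinearMap
          (LinearMap.ker (Ideal.Quotient.mkₐ (ZMod p) J).toLinearMap
            ⊓ homogeneousSubmodule (Fin ℓ) (ZMod p) n) := by
    apply le_antisymm
    · rintro _ ⟨x, rfl⟩
      exact Submodule.mem_map.mpr ⟨Ψ x, hΨmem x, rfl⟩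
    · rintro _ ⟨y, hy, rfl⟩
      obtain ⟨hyJ, hySn⟩ := Submodule.mem_inf.mp hy
      rw [hkJmem] at hyJ
      obtain ⟨c, hchom, hczero, hcsum⟩ :=
        aux_hc_span b d hhom (show y ∈ Ideal.span (Set.range b) from hJ ▸ hyJ) n
      have hyeq : y = ∑ k : Fin ℓ, c k * b k := by
        rw [← hcsum, homogeneousComponent_of_mem hySn, if_pos rfl]
      refine ⟨fun i => ⟨c i.1, (mem_homogeneousSubmodule _ _).mpr (hchom i.1)⟩, ?_⟩
      rw [hΦdef, LinearMap.comp_apply, hΨ]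
      have hsum2 : ∑ k ∈ Finset.univ.filter (fun k : Fin ℓ => (k : ℕ) < m ∧ d k ≤ n),
          c k * b k
          = ∑ i : {i : Fin ℓ // (i : ℕ) < m ∧ d i ≤ n}, c i.1 * b i.1 :=
        Finset.sum_subtype _ (fun k => by simp) _
      have hIdiff : y - ∑ i : {i : Fin ℓ // (i : ℕ) < m ∧ d i ≤ n}, c i.1 * b i.1 ∈ I := by
        rw [hyeq, ← hsum2,
          ← Finset.sum_filter_add_sum_filter_not Finset.univ
            (fun k : Fin ℓ => (k : ℕ) < m ∧ d k ≤ n) (fun k => c k * b k),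
          add_sub_cancel_left]
        refine Ideal.sum_mem _ fun k hk => ?_
        simp only [Finset.mem_filter, Finset.mem_univ, true_and, not_and, not_le] at hk
        by_cases hkm : (k : ℕ) < m
        · rw [hczero k (hk hkm), zero_mul]
          exact zero_mem _
        · exact Ideal.mul_mem_left _ _
            (hI ▸ Ideal.subset_span (Or.inr ⟨k, by omega, rfl⟩))
      simp only [AlgHom.toLinearMap_apply, Ideal.Quotient.mkₐ_eq_mk]
      rw [Ideal.Quotient.mk_eq_mk_iff_sub_mem]
      exact neg_mem_iff.mp (by simpa [neg_sub] using hIdiff)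
  -- the kernel of `Φ`
  have hker : LinearMap.ker Φ
      = Submodule.pi Set.univ (fun i : {i : Fin ℓ // (i : ℕ) < m ∧ d i ≤ n} =>
          Submodule.comap (homogeneousSubmodule (Fin ℓ) (ZMod p) (n - d i.1)).subtype
            (Submodule.restrictScalars (ZMod p) J)) := by
    ext x
    simp only [LinearMap.mem_ker, hΦdef, LinearMap.comp_apply, Submodule.mem_pi,
      Set.mem_univ, forall_true_left, Submodule.mem_comap, Submodule.coe_subtype,
      Submodule.restrictScalars_mem, AlgHom.toLinearMap_apply, Ideal.Quotient.mkₐ_eq_mk,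
      Ideal.Quotient.eq_zero_iff_mem]
    constructor
    · intro hxI i
      set x' : Fin ℓ → MvPolynomial (Fin ℓ) (ZMod p) := fun k =>
        if h : (k : ℕ) < m ∧ d k ≤ n then
          (x ⟨k, h⟩ : MvPolynomial (Fin ℓ) (ZMod p)) else 0 with hx'
      have e1 : ∑ i : {i : Fin ℓ // (i : ℕ) < m ∧ d i ≤ n},
          (x i : MvPolynomial (Fin ℓ) (ZMod p)) * b i.1
          = ∑ k ∈ Finset.univ.filter (fun k : Fin ℓ => (k : ℕ) < m ∧ d k ≤ n),
              x' k * b k := by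
        rw [Finset.sum_subtype (p := fun k : Fin ℓ => (k : ℕ) < m ∧ d k ≤ n)
          (Finset.univ.filter (fun k : Fin ℓ => (k : ℕ) < m ∧ d k ≤ n))
          (fun k => by simp) (fun k => x' k * b k)]
        refine Finset.sum_congr rfl fun i _ => ?_
        simp only [hx', dif_pos i.2, Subtype.coe_eta]
      have e2 : ∑ k ∈ Finset.univ.filter (fun k : Fin ℓ => (k : ℕ) < m ∧ d k ≤ n),
          x' k * b k
          = ∑ k ∈ Finset.univ.filter (fun k : Fin ℓ => (k : ℕ) < m), x' k * b k := by
        refine Finset.sum_subset (fun k hk => by simp only [Finset.mem_filter] at hk ⊢; exact ⟨hk.1, hk.2.1⟩) ?_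
        intro k hk1 hk2
        simp only [Finset.mem_filter, Finset.mem_univ, true_and] at hk1 hk2
        simp only [hx']
        rw [dif_neg (fun hq => hk2 hq), zero_mul]
      have hmem : ∑ k ∈ Finset.univ.filter (fun k : Fin ℓ => (k : ℕ) < m), x' k * b k
          ∈ Ideal.span (Set.range (auxF m b)) := by
        rw [← e2, ← e1, ← hΨ, ← auxF_span, ← hI]
        exact hxI
      have hall := aux_syz_main m b hreg x' hmem
      have := hall i.1 i.2.1
      simp only [hx', dif_pos i.2, Subtype.coe_eta] at this
      rw [hJ]
      simpa using this
    · intro hxJ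
      rw [hΨ]
      refine Ideal.sum_mem _ fun i _ => ?_
      exact hmulI i.1 i.2.1 _ (hxJ i)
  -- finrank bookkeeping
  haveI : FiniteDimensional (ZMod p)
      ↥(LinearMap.ker (Ideal.Quotient.mkₐ (ZMod p) J).toLinearMap
        ⊓ homogeneousSubmodule (Fin ℓ) (ZMod p) n) :=
    Submodule.finiteDimensional_of_le inf_le_right
  have h1 := aux_finrank_map_add (Ideal.Quotient.mkₐ (ZMod p) I).toLinearMap
    (homogeneousSubmodule (Fin ℓ) (ZMod p) n)
  have h2 := aux_finrank_map_add (Ideal.Quotient.mkₐ (ZMod p) J).toLinearMap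
    (homogeneousSubmodule (Fin ℓ) (ZMod p) n)
  have h3 : ∀ i : {i : Fin ℓ // (i : ℕ) < m ∧ d i ≤ n},
      Module.finrank (ZMod p)
        ((homogeneousSubmodule (Fin ℓ) (ZMod p) (n - d i.1)).map
          (Ideal.Quotient.mkₐ (ZMod p) J).toLinearMap)
      + Module.finrank (ZMod p)
          ↥(LinearMap.ker (Ideal.Quotient.mkₐ (ZMod p) J).toLinearMap
            ⊓ homogeneousSubmodule (Fin ℓ) (ZMod p) (n - d i.1))
      = Module.finrank (ZMod p)
          ↥(homogeneousSubmodule (Fin ℓ) (ZMod p) (n - d i.1)) := by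
    intro i
    haveI := hfd (n - d i.1)
    exact aux_finrank_map_add _ _
  have h4 := aux_finrank_map_add (Ideal.Quotient.mkₐ (ZMod p) I).toLinearMap
    (LinearMap.ker (Ideal.Quotient.mkₐ (ZMod p) J).toLinearMap
      ⊓ homogeneousSubmodule (Fin ℓ) (ZMod p) n)
  have hinf : LinearMap.ker (Ideal.Quotient.mkₐ (ZMod p) I).toLinearMap
      ⊓ (LinearMap.ker (Ideal.Quotient.mkₐ (ZMod p) J).toLinearMap
        ⊓ homogeneousSubmodule (Fin ℓ) (ZMod p) n)
      = LinearMap.ker (Ideal.Quotient.mkₐ (ZMod p) I).toLinearMap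
        ⊓ homogeneousSubmodule (Fin ℓ) (ZMod p) n := by
    ext z
    simp only [Submodule.mem_inf]
    constructor
    · rintro ⟨h1, h2, h3⟩
      exact ⟨h1, h3⟩
    · rintro ⟨h1, h2⟩
      exact ⟨h1, (hkJmem z).mpr (hIJ ((hkImem z).mp h1)), h2⟩
  rw [hinf] at h4
  have h5 := LinearMap.finrank_range_add_finrank_ker Φ
  rw [hrange, hker, Module.finrank_pi_fintype] at h5
  have h7 : Module.finrank (ZMod p)
      ↥(Submodule.pi Set.univ (fun i : {i : Fin ℓ // (i : ℕ) < m ∧ d i ≤ n} =>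
          Submodule.comap (homogeneousSubmodule (Fin ℓ) (ZMod p) (n - d i.1)).subtype
            (Submodule.restrictScalars (ZMod p) J)))
      = ∑ i : {i : Fin ℓ // (i : ℕ) < m ∧ d i ≤ n},
          Module.finrank (ZMod p)
            ↥(LinearMap.ker (Ideal.Quotient.mkₐ (ZMod p) J).toLinearMap
              ⊓ homogeneousSubmodule (Fin ℓ) (ZMod p) (n - d i.1)) := by
    rw [(auxPiSubEquiv (fun i : {i : Fin ℓ // (i : ℕ) < m ∧ d i ≤ n} =>
      Submodule.comap (homogeneousSubmodule (Fin ℓ) (ZMod p) (n - d i.1)).subtype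
        (Submodule.restrictScalars (ZMod p) J))).finrank_eq,
      Module.finrank_pi_fintype]
    refine Finset.sum_congr rfl fun i _ => ?_
    have e : Submodule.comap (homogeneousSubmodule (Fin ℓ) (ZMod p) (n - d i.1)).subtype
        (Submodule.restrictScalars (ZMod p) J)
        = Submodule.comap (homogeneousSubmodule (Fin ℓ) (ZMod p) (n - d i.1)).subtype
            (LinearMap.ker (Ideal.Quotient.mkₐ (ZMod p) J).toLinearMap
              ⊓ homogeneousSubmodule (Fin ℓ) (ZMod p) (n - d i.1)) := by
      ext z
      simp only [Submodule.mem_comap, Submodule.coe_subtype,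
        Submodule.restrictScalars_mem, Submodule.mem_inf, hkJmem]
      exact ⟨fun h => ⟨h, z.2⟩, fun h => h.1⟩
    rw [e, (Submodule.comapSubtypeEquivOfLe inf_le_right).finrank_eq]
  rw [h7] at h5
  have hsum : ∑ i : {i : Fin ℓ // (i : ℕ) < m ∧ d i ≤ n},
      Module.finrank (ZMod p)
        ((homogeneousSubmodule (Fin ℓ) (ZMod p) (n - d i.1)).map
          (Ideal.Quotient.mkₐ (ZMod p) J).toLinearMap)
      + ∑ i : {i : Fin ℓ // (i : ℕ) < m ∧ d i ≤ n},
          Module.finrank (ZMod p)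
            ↥(LinearMap.ker (Ideal.Quotient.mkₐ (ZMod p) J).toLinearMap
              ⊓ homogeneousSubmodule (Fin ℓ) (ZMod p) (n - d i.1))
      = ∑ i : {i : Fin ℓ // (i : ℕ) < m ∧ d i ≤ n},
          Module.finrank (ZMod p)
            ↥(homogeneousSubmodule (Fin ℓ) (ZMod p) (n - d i.1)) := by
    rw [← Finset.sum_add_distrib]
    exact Finset.sum_congr rfl fun i _ => h3 i
  rw [Finset.sum_subtype (p := fun i : Fin ℓ => (i : ℕ) < m ∧ d i ≤ n)
      (Finset.univ.filter (fun i : Fin ℓ => (i : ℕ) < m ∧ d i ≤ n)) (fun i => by simp)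
      (fun i : Fin ℓ => Module.finrank (ZMod p)
        ((homogeneousSubmodule (Fin ℓ) (ZMod p) (n - d i)).map
          (Ideal.Quotient.mkₐ (ZMod p) J).toLinearMap))]
  omega
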